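/- For 3 < γ ≤ 4, β_γ ≤ √((γ-3)/γ), where β_γ = √(-1/2 + 3/γ - √(12-3γ)/(2√γ)). -/
import Mathlib


open Real

noncomputable def betaGamma (γ : ℝ) : ℝ :=
  Real.sqrt (-1/2 + 3/γ - Real.sqrt (12 - 3*γ) / (2 * Real.sqrt γ))

theorem beta_le_sqrt (γ : ℝ) (hγ3 : 3 < γ) (hγ4 : γ ≤ 4) :
    betaGamma γ ≤ Real.sqrt ((γ - 3)/γ) := by
  have hγ0 : (0:ℝ) < γ := by linarith
  have h12 : (0:ℝ) ≤ 12 - 3*γ := by linarith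
  have hx0 : (0:ℝ) ≤ (12 - 3*γ)/γ := div_nonneg h12 hγ0.le
  have hx1 : (12 - 3*γ)/γ ≤ 1 := by rw [div_le_one hγ0]; linarith
  have hs1 : Real.sqrt ((12 - 3*γ)/γ) ≤ 1 := Real.sqrt_le_one.mpr hx1
  have hs : (12 - 3*γ)/γ ≤ Real.sqrt ((12 - 3*γ)/γ) := by
    nlinarith [Real.sq_sqrt hx0, Real.sqrt_nonneg ((12 - 3*γ)/γ)]
  have hrw : Real.sqrt (12 - 3*γ) / (2 * Real.sqrt γ) =
      Real.sqrt ((12 - 3*γ)/γ) / 2 := by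
    rw [Real.sqrt_div h12]
    ring
  have key : -1/2 + 3/γ - (γ - 3)/γ = ((12 - 3*γ)/γ)/2 := by
    field_simp
    ring
  apply Real.sqrt_le_sqrt
  rw [hrw]
  linarith
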